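/- The specialized Euler matrix 𝔈 is invertible with inverse 𝔈^{−1} = 𝓓; furthermore, for every k ∈ ℕ with k ≥ 1, the matrix 𝓔^{(k)}(k/2) is invertible with inverse [𝓔^{(k)}(k/2)]^{−1} = 𝓓^k. -/

import Mathlib

noncomputable section

/-- `E α x k` is the generalized Euler polynomial `E_k^{(α)}(x)`, characterized by the
generating function `(2/(e^z+1))^α e^{xz} = Σ_k E_k^{(α)}(x) z^k / k!` for `|z| < π`. -/
def IsGenEulerFamily (E : ℝ → ℝ → ℕ → ℝ) : Prop :=
  ∀ α x z : ℝ, |z| < Real.pi →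
    HasSum (fun k : ℕ => E α x k * z ^ k / (Nat.factorial k : ℝ))
      ((2 / (Real.exp z + 1)) ^ α * Real.exp (x * z))

/-- The generalized `(n+1)×(n+1)` Euler matrix `𝓔^{(α)}(x)`, with `(i,j)` entry
`C(i,j) E_{i-j}^{(α)}(x)` (which is `0` for `j > i` since then `C(i,j) = 0`). -/
def genEulerMatrix (E : ℝ → ℝ → ℕ → ℝ) (n : ℕ) (α x : ℝ) :
    Matrix (Fin (n + 1)) (Fin (n + 1)) ℝ :=
  Matrix.of fun i j => (Nat.choose (i : ℕ) (j : ℕ) : ℝ) * E α x ((i : ℕ) - (j : ℕ))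

/-- The matrix `𝓓`, with `(i,j)` entry `(1+(-1)^(i-j)) C(i,j) 2^(j-i-1)`
(which is `0` for `j > i` since then `C(i,j) = 0`). -/
def Dmatrix (n : ℕ) : Matrix (Fin (n + 1)) (Fin (n + 1)) ℝ :=
  Matrix.of fun i j =>
    (1 + (-1 : ℝ) ^ ((i : ℤ) - (j : ℤ))) * (Nat.choose (i : ℕ) (j : ℕ) : ℝ) *
      (2 : ℝ) ^ ((j : ℤ) - (i : ℤ) - 1)

open Finset

/-! ### Auxiliary lemmas -/

/-- If a power series sums to `0` on `(-π, π)`, all its coefficients vanish. -/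
lemma aux_coeff_eq_zero_of_hasSum_zero {c : ℕ → ℝ}
    (h : ∀ z : ℝ, |z| < Real.pi → HasSum (fun k => c k * z ^ k) 0) (k : ℕ) : c k = 0 := by
  set p := FormalMultilinearSeries.ofScalars ℝ c with hp
  have h1 : |(1:ℝ)| < Real.pi := by
    rw [abs_one]; linarith [Real.pi_gt_three]
  have habs : Summable fun n => |c n| := by
    have := (h 1 h1).summable
    simp only [one_pow, mul_one] at this
    exact this.abs
  have hs : Summable fun n => ‖p n‖ * ((1 : NNReal) : ℝ) ^ n := by
    simp only [hp, FormalMultilinearSeries.ofScalars_norm, Real.norm_eq_abs, NNReal.coe_one,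
      one_pow, mul_one]
    exact habs
  have hr : (1 : ENNReal) ≤ p.radius := by
    simpa using p.le_radius_of_summable_norm hs
  have hball := p.hasFPowerSeriesOnBall (lt_of_lt_of_le one_pos hr)
  have hat : HasFPowerSeriesAt p.sum p 0 := hball.hasFPowerSeriesAt
  have heq : p.sum =ᶠ[nhds (0:ℝ)] (fun _ => 0) := by
    filter_upwards [Metric.ball_mem_nhds (0:ℝ) one_pos] with z hz
    have hz1 : |z| < 1 := by simpa [Real.dist_eq] using hz
    have hzπ : |z| < Real.pi := hz1.trans (by linarith [Real.pi_gt_three])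
    have hps : p.sum z = ∑' n, c n * z ^ n := by
      unfold FormalMultilinearSeries.sum
      refine tsum_congr fun n => ?_
      rw [hp, FormalMultilinearSeries.ofScalars_apply_eq, smul_eq_mul]
    rw [hps, (h z hzπ).tsum_eq]
  have hzero : HasFPowerSeriesAt (fun _ => (0:ℝ)) p 0 := hat.congr heq
  have hp0 : p = 0 := HasFPowerSeriesAt.eq_zero hzero
  have h2 : p k = 0 := by rw [hp0]; rfl
  rw [hp] at h2
  exact (FormalMultilinearSeries.ofScalars_eq_zero (𝕜 := ℝ) ℝ k).mp h2

/-- Uniqueness of exponential generating function coefficients. -/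
lemma aux_coeff_unique {a b : ℕ → ℝ} {S : ℝ → ℝ}
    (ha : ∀ z : ℝ, |z| < Real.pi →
      HasSum (fun k => a k * z ^ k / (Nat.factorial k : ℝ)) (S z))
    (hb : ∀ z : ℝ, |z| < Real.pi →
      HasSum (fun k => b k * z ^ k / (Nat.factorial k : ℝ)) (S z)) : a = b := by
  funext k
  have key : ∀ j, (a j - b j) / (Nat.factorial j : ℝ) = 0 := by
    refine aux_coeff_eq_zero_of_hasSum_zero (fun z hz => ?_)
    have hsub := (ha z hz).sub (hb z hz)
    rw [sub_self] at hsub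
    have h2 : (fun j => (a j - b j) / (Nat.factorial j : ℝ) * z ^ j)
        = fun j => a j * z ^ j / (Nat.factorial j : ℝ) - b j * z ^ j / (Nat.factorial j : ℝ) :=
      funext fun j => by ring
    rw [h2]
    exact hsub
  have hk := key k
  have hfac : (Nat.factorial k : ℝ) ≠ 0 := Nat.cast_ne_zero.mpr (Nat.factorial_ne_zero k)
  rcases div_eq_zero_iff.mp hk with h | h
  · linarith [sub_eq_zero.mp h]
  · exact absurd h hfac

/-- Cauchy product of two convergent real series. -/
lemma aux_hasSum_cauchy {f g : ℕ → ℝ} {A B : ℝ} (hf : HasSum f A) (hg : HasSum g B) :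
    HasSum (fun n => ∑ k ∈ range (n + 1), f k * g (n - k)) (A * B) := by
  have hf' : Summable fun n => ‖f n‖ := by
    simpa [Real.norm_eq_abs] using hf.summable.abs
  have hg' : Summable fun n => ‖g n‖ := by
    simpa [Real.norm_eq_abs] using hg.summable.abs
  have hsumm := summable_sum_mul_range_of_summable_norm' hf' hf.summable hg' hg.summable
  have ht := tsum_mul_tsum_eq_tsum_sum_range_of_summable_norm hf' hg'
  rw [hf.tsum_eq, hg.tsum_eq] at ht
  exact hsumm.hasSum_iff.mpr ht.symm

/-- The convolution identity for generalized Euler polynomials. -/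
lemma aux_euler_conv {E : ℝ → ℝ → ℕ → ℝ} (hE : IsGenEulerFamily E) (α β x y : ℝ) (m : ℕ) :
    E (α + β) (x + y) m
      = ∑ i ∈ range (m + 1), (m.choose i : ℝ) * E α x i * E β y (m - i) := by
  have h := aux_coeff_unique (a := fun m => E (α + β) (x + y) m)
    (b := fun m => ∑ i ∈ range (m + 1), (m.choose i : ℝ) * E α x i * E β y (m - i))
    (S := fun z => (2 / (Real.exp z + 1)) ^ (α + β) * Real.exp ((x + y) * z))
    (fun z hz => hE (α + β) (x + y) z hz) ?_
  · exact congrFun h m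
  intro z hz
  have hpos : (0:ℝ) < 2 / (Real.exp z + 1) := by positivity
  have hmul := aux_hasSum_cauchy (hE α x z hz) (hE β y z hz)
  have hval : (2 / (Real.exp z + 1)) ^ α * Real.exp (x * z)
      * ((2 / (Real.exp z + 1)) ^ β * Real.exp (y * z))
      = (2 / (Real.exp z + 1)) ^ (α + β) * Real.exp ((x + y) * z) := by
    rw [Real.rpow_add hpos, add_mul, Real.exp_add]
    ring
  rw [hval] at hmul
  refine hmul.congr_fun fun n => ?_
  rw [sum_mul, sum_div]
  refine Finset.sum_congr rfl fun k hk => ?_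
  have hk' : k ≤ n := Nat.lt_succ_iff.mp (mem_range.mp hk)
  have hzpow : z ^ n = z ^ k * z ^ (n - k) := by
    rw [← pow_add, Nat.add_sub_cancel' hk']
  rw [Nat.cast_choose ℝ hk', hzpow]
  have h1 : (Nat.factorial k : ℝ) ≠ 0 := Nat.cast_ne_zero.mpr (Nat.factorial_ne_zero k)
  have h2 : (Nat.factorial (n - k) : ℝ) ≠ 0 := Nat.cast_ne_zero.mpr (Nat.factorial_ne_zero _)
  field_simp

/-- `E_k^{(0)}(0) = δ_{k,0}`. -/
lemma aux_euler_zero {E : ℝ → ℝ → ℕ → ℝ} (hE : IsGenEulerFamily E) (k : ℕ) :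
    E 0 0 k = if k = 0 then 1 else 0 := by
  have h := aux_coeff_unique (a := fun k => E 0 0 k)
    (b := fun k => if k = 0 then 1 else 0)
    (S := fun z => (2 / (Real.exp z + 1)) ^ (0:ℝ) * Real.exp (0 * z))
    (fun z hz => hE 0 0 z hz) ?_
  · exact congrFun h k
  intro z hz
  have hval : (2 / (Real.exp z + 1)) ^ (0:ℝ) * Real.exp (0 * z) = 1 := by
    rw [Real.rpow_zero, zero_mul, Real.exp_zero, one_mul]
  have h0 := hasSum_ite_eq (0 : ℕ) (1 : ℝ)
  have hs1 : HasSum (fun j : ℕ => (if j = 0 then (1:ℝ) else 0) * z ^ j / (Nat.factorial j : ℝ))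
      1 := by
    refine h0.congr_fun fun j => ?_
    by_cases hj : j = 0 <;> simp [hj]
  show HasSum _ ((2 / (Real.exp z + 1)) ^ (0:ℝ) * Real.exp (0 * z))
  rw [hval]
  exact hs1

/-- `E_k^{(-1)}(-1/2) = ((1/2)^k + (-1/2)^k)/2`. -/
lemma aux_euler_neg_one {E : ℝ → ℝ → ℕ → ℝ} (hE : IsGenEulerFamily E) (k : ℕ) :
    E (-1) (-(1/2)) k = ((1/2 : ℝ) ^ k + (-(1/2) : ℝ) ^ k) / 2 := by
  have h := aux_coeff_unique (a := fun k => E (-1) (-(1/2)) k)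
    (b := fun k => ((1/2 : ℝ) ^ k + (-(1/2) : ℝ) ^ k) / 2)
    (S := fun z => (2 / (Real.exp z + 1)) ^ (-1:ℝ) * Real.exp (-(1/2) * z))
    (fun z hz => hE (-1) (-(1/2)) z hz) ?_
  · exact congrFun h k
  intro z hz
  have hpos : (0:ℝ) < 2 / (Real.exp z + 1) := by positivity
  have hval : (2 / (Real.exp z + 1)) ^ (-1:ℝ) * Real.exp (-(1/2) * z)
      = (Real.exp (z/2) + Real.exp (-(z/2))) / 2 := by
    have key : Real.exp z * Real.exp (-(z/2)) = Real.exp (z/2) := by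
      rw [← Real.exp_add]; ring_nf
    rw [Real.rpow_neg_one, inv_div, show -(1/2 : ℝ) * z = -(z/2) by ring,
      div_mul_eq_mul_div, add_mul, key, one_mul]
  have h1 : HasSum (fun n : ℕ => (z/2) ^ n / (Nat.factorial n : ℝ)) (Real.exp (z/2)) := by
    rw [Real.exp_eq_exp_ℝ]
    exact NormedSpace.expSeries_div_hasSum_exp (z/2)
  have h2 : HasSum (fun n : ℕ => (-(z/2)) ^ n / (Nat.factorial n : ℝ)) (Real.exp (-(z/2))) := by
    rw [Real.exp_eq_exp_ℝ]
    exact NormedSpace.expSeries_div_hasSum_exp (-(z/2))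
  have h3 := (h1.add h2).div_const 2
  have hs1 : HasSum
      (fun k : ℕ => ((1/2 : ℝ) ^ k + (-(1/2) : ℝ) ^ k) / 2 * z ^ k / (Nat.factorial k : ℝ))
      ((Real.exp (z/2) + Real.exp (-(z/2))) / 2) := by
    refine h3.congr_fun fun j => ?_
    rw [show z/2 = (1/2:ℝ) * z by ring, show -((1/2:ℝ) * z) = (-(1/2:ℝ)) * z by ring,
      mul_pow, mul_pow]
    ring
  show HasSum _ ((2 / (Real.exp z + 1)) ^ (-1:ℝ) * Real.exp (-(1/2) * z))
  rw [hval]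
  exact hs1

/-- Trinomial revision: `C(i,l) C(l,j) = C(i,j) C(i-j, l-j)`. -/
lemma aux_trinomial_revision {j l i : ℕ} (h1 : j ≤ l) (h2 : l ≤ i) :
    i.choose l * l.choose j = i.choose j * (i - j).choose (l - j) := by
  have hne : 0 < Nat.factorial j * Nat.factorial (l - j) * Nat.factorial (i - l) :=
    Nat.mul_pos (Nat.mul_pos (Nat.factorial_pos _) (Nat.factorial_pos _)) (Nat.factorial_pos _)
  refine Nat.eq_of_mul_eq_mul_right hne ?_
  have e1 : i.choose l * Nat.factorial l * Nat.factorial (i - l) = Nat.factorial i :=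
    Nat.choose_mul_factorial_mul_factorial h2
  have e2 : l.choose j * Nat.factorial j * Nat.factorial (l - j) = Nat.factorial l :=
    Nat.choose_mul_factorial_mul_factorial h1
  have e3 : i.choose j * Nat.factorial j * Nat.factorial (i - j) = Nat.factorial i :=
    Nat.choose_mul_factorial_mul_factorial (h1.trans h2)
  have e4 : (i - j).choose (l - j) * Nat.factorial (l - j) * Nat.factorial (i - j - (l - j))
      = Nat.factorial (i - j) :=
    Nat.choose_mul_factorial_mul_factorial (Nat.sub_le_sub_right h2 j)
  have e5 : i - j - (l - j) = i - l := by omega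
  rw [e5] at e4
  calc i.choose l * l.choose j * (Nat.factorial j * Nat.factorial (l - j) * Nat.factorial (i - l))
      = i.choose l * (l.choose j * Nat.factorial j * Nat.factorial (l - j))
        * Nat.factorial (i - l) := by ring
    _ = i.choose l * Nat.factorial l * Nat.factorial (i - l) := by rw [e2]
    _ = Nat.factorial i := e1
    _ = i.choose j * Nat.factorial j * Nat.factorial (i - j) := e3.symm
    _ = i.choose j * Nat.factorial j
        * ((i - j).choose (l - j) * Nat.factorial (l - j) * Nat.factorial (i - l)) := by rw [e4]
    _ = i.choose j * (i - j).choose (l - j)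
        * (Nat.factorial j * Nat.factorial (l - j) * Nat.factorial (i - l)) := by ring

/-- The product rule for generalized Euler matrices. -/
lemma aux_genEulerMatrix_mul {E : ℝ → ℝ → ℕ → ℝ} (hE : IsGenEulerFamily E) (n : ℕ)
    (α β x y : ℝ) :
    genEulerMatrix E n α x * genEulerMatrix E n β y = genEulerMatrix E n (α + β) (x + y) := by
  ext i j
  rw [Matrix.mul_apply]
  simp only [genEulerMatrix, Matrix.of_apply]
  set f : ℕ → ℝ := fun l =>
    ((i : ℕ).choose l : ℝ) * E α x ((i : ℕ) - l) * ((l.choose (j : ℕ) : ℝ) * E β y (l - (j : ℕ)))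
    with hf
  have hfin : ∑ l : Fin (n + 1), ((i : ℕ).choose (l : ℕ) : ℝ) * E α x ((i : ℕ) - (l : ℕ)) *
      (((l : ℕ).choose (j : ℕ) : ℝ) * E β y ((l : ℕ) - (j : ℕ))) = ∑ l ∈ range (n + 1), f l :=
    Fin.sum_univ_eq_sum_range f (n + 1)
  rw [hfin]
  by_cases hij : (j : ℕ) ≤ (i : ℕ)
  · have hin : (i : ℕ) ≤ n := Nat.lt_succ_iff.mp i.isLt
    set m := (i : ℕ) - (j : ℕ) with hm
    have hrange : ∑ l ∈ range (n + 1), f l = ∑ l ∈ Ico (j : ℕ) ((i : ℕ) + 1), f l := by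
      refine (Finset.sum_subset ?_ ?_).symm
      · intro l hl
        rw [mem_Ico] at hl
        rw [mem_range]
        omega
      · intro l _ hl
        rw [mem_Ico] at hl
        rw [hf]
        by_cases h : (l : ℕ) < (j : ℕ)
        · simp [Nat.choose_eq_zero_of_lt h]
        · have : (i : ℕ) < l := by omega
          simp [Nat.choose_eq_zero_of_lt this]
    rw [hrange, Finset.sum_Ico_eq_sum_range,
      show (i : ℕ) + 1 - (j : ℕ) = m + 1 by omega]
    rw [show α + β = β + α from add_comm α β, show x + y = y + x from add_comm x y,
      aux_euler_conv hE β α y x m, mul_sum]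
    refine Finset.sum_congr rfl fun t ht => ?_
    have ht' : t ≤ m := Nat.lt_succ_iff.mp (mem_range.mp ht)
    have h1 : (j : ℕ) ≤ (j : ℕ) + t := Nat.le_add_right _ _
    have h2 : (j : ℕ) + t ≤ (i : ℕ) := by omega
    have htri := aux_trinomial_revision h1 h2
    have e1 : (i : ℕ) - ((j : ℕ) + t) = m - t := by omega
    have e2 : (j : ℕ) + t - (j : ℕ) = t := by omega
    have e3 : (i : ℕ) - (j : ℕ) = m := hm.symm
    rw [hf]
    simp only [e1, e2, e3]
    have hcast : ((i : ℕ).choose ((j : ℕ) + t) : ℝ) * (((j : ℕ) + t).choose (j : ℕ) : ℝ)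
        = ((i : ℕ).choose (j : ℕ) : ℝ) * ((m.choose t : ℕ) : ℝ) := by
      rw [← Nat.cast_mul, htri, e3, e2, Nat.cast_mul]
    linear_combination (E α x (m - t) * E β y t) * hcast
  · rw [Nat.choose_eq_zero_of_lt (by omega : (i : ℕ) < (j : ℕ))]
    rw [Nat.cast_zero, zero_mul]
    refine Finset.sum_eq_zero fun l hl => ?_
    rw [hf]
    by_cases h : l ≤ (i : ℕ)
    · have : l < (j : ℕ) := by omega
      simp [Nat.choose_eq_zero_of_lt this]
    · have : (i : ℕ) < l := by omega
      simp [Nat.choose_eq_zero_of_lt this]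

/-- `𝓔^{(0)}(0)` is the identity matrix. -/
lemma aux_genEulerMatrix_zero {E : ℝ → ℝ → ℕ → ℝ} (hE : IsGenEulerFamily E) (n : ℕ) :
    genEulerMatrix E n 0 0 = 1 := by
  ext i j
  simp only [genEulerMatrix, Matrix.of_apply, aux_euler_zero hE, Matrix.one_apply]
  by_cases hij : i = j
  · subst hij
    simp
  · by_cases h : (j : ℕ) ≤ (i : ℕ)
    · have h2 : (i : ℕ) - (j : ℕ) ≠ 0 := by
        have := Fin.val_ne_of_ne hij
        omega
      simp [h2, hij]
    · rw [Nat.choose_eq_zero_of_lt (by omega)]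
      simp [hij]

/-- `𝓓 = 𝓔^{(-1)}(-1/2)`. -/
lemma aux_dmatrix_eq {E : ℝ → ℝ → ℕ → ℝ} (hE : IsGenEulerFamily E) (n : ℕ) :
    Dmatrix n = genEulerMatrix E n (-1) (-(1/2)) := by
  ext i j
  simp only [Dmatrix, genEulerMatrix, Matrix.of_apply, aux_euler_neg_one hE]
  by_cases h : (j : ℕ) ≤ (i : ℕ)
  · set d := (i : ℕ) - (j : ℕ) with hd
    have e1 : (i : ℤ) - (j : ℤ) = (d : ℤ) := by omega
    have e2 : (j : ℤ) - (i : ℤ) - 1 = -((d : ℤ) + 1) := by omega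
    rw [e1, e2, zpow_neg, show ((d : ℤ) + 1) = ((d + 1 : ℕ) : ℤ) by push_cast; ring,
      zpow_natCast, zpow_natCast]
    have h2 : ((2 : ℝ) ^ d) ≠ 0 := by positivity
    have hneg : (-(1/2) : ℝ) ^ d = (-1 : ℝ) ^ d * ((1:ℝ)/2) ^ d := by
      rw [← mul_pow]; norm_num
    rw [hneg]
    have hhalf : ((1:ℝ)/2) ^ d = ((2:ℝ) ^ d)⁻¹ := by
      rw [one_div, inv_pow]
    rw [hhalf, pow_succ]
    field_simp
  · rw [Nat.choose_eq_zero_of_lt (by omega)]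
    simp

theorem specialized_euler_matrix_inverse (E : ℝ → ℝ → ℕ → ℝ) (hE : IsGenEulerFamily E)
    (n : ℕ) :
    (genEulerMatrix E n 1 (1 / 2) * Dmatrix n = 1 ∧
     Dmatrix n * genEulerMatrix E n 1 (1 / 2) = 1) ∧
    ∀ k : ℕ, 1 ≤ k →
      genEulerMatrix E n (k : ℝ) ((k : ℝ) / 2) * (Dmatrix n) ^ k = 1 ∧
      (Dmatrix n) ^ k * genEulerMatrix E n (k : ℝ) ((k : ℝ) / 2) = 1 := by
  have hD : ∀ k : ℕ, (Dmatrix n) ^ k = genEulerMatrix E n (-(k : ℝ)) (-((k : ℝ) / 2)) := by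
    intro k
    induction k with
    | zero =>
      simp only [pow_zero, Nat.cast_zero, neg_zero, zero_div]
      exact (aux_genEulerMatrix_zero hE n).symm
    | succ k ih =>
      rw [pow_succ, ih, aux_dmatrix_eq hE n, aux_genEulerMatrix_mul hE]
      congr 1 <;> push_cast <;> ring
  constructor
  · constructor
    · rw [aux_dmatrix_eq hE n, aux_genEulerMatrix_mul hE,
        show (1 : ℝ) + (-1) = 0 by ring, show (1/2 : ℝ) + (-(1/2)) = 0 by ring]
      exact aux_genEulerMatrix_zero hE n
    · rw [aux_dmatrix_eq hE n, aux_genEulerMatrix_mul hE,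
        show (-1 : ℝ) + 1 = 0 by ring, show (-(1/2) : ℝ) + 1/2 = 0 by ring]
      exact aux_genEulerMatrix_zero hE n
  · intro k _
    constructor
    · rw [hD k, aux_genEulerMatrix_mul hE,
        show (k : ℝ) + -(k : ℝ) = 0 by ring, show (k : ℝ)/2 + -((k : ℝ)/2) = 0 by ring]
      exact aux_genEulerMatrix_zero hE n
    · rw [hD k, aux_genEulerMatrix_mul hE,
        show -(k : ℝ) + (k : ℝ) = 0 by ring, show -((k : ℝ)/2) + (k : ℝ)/2 = 0 by ring]
      exact aux_genEulerMatrix_zero hE n
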